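/- arXiv:1202.6638 — 2 statements merged into one kernel-verified Lean document; each statement's English description precedes it below -/
import Mathlib

section
/- Let Ω ⊆ ℂ^N be a pseudoconvex domain and φ : Ω → Ω a holomorphic map. If C_φ is hypercyclic (with respect to the full sequence n_l = l), then C_φ is hypercyclic with respect to every increasing arithmetic sequence of natural numbers, i.e. with respect to (lμ + ν)_{l ∈ ℕ} for every μ ∈ ℕ with μ ≥ 1 and every ν ∈ {0, …, μ − 1}. -/
open Set Filter Topology Metric

noncomputable section

/-- ℂ^N -/
abbrev CN (N : ℕ) := Fin N → ℂ

/-- A domain: a nonempty open connected set. -/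
def CNDomain {N : ℕ} (Ω : Set (CN N)) : Prop :=
  IsOpen Ω ∧ IsConnected Ω

/-- The holomorphic hull of `K` with respect to `Ω`. -/
def holHull {N : ℕ} (Ω K : Set (CN N)) : Set (CN N) :=
  {z | z ∈ Ω ∧ ∀ f : CN N → ℂ, DifferentiableOn ℂ f Ω → ‖f z‖ ≤ ⨆ w ∈ K, ‖f w‖}

/-- `K` is `Ω`-convex if it equals its holomorphic hull w.r.t. `Ω`. -/
def OmegaConvex {N : ℕ} (Ω K : Set (CN N)) : Prop := holHull Ω K = K

/-- Pseudoconvexity, via the solution of the Levi problem: holomorphic convexity. -/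
def Pseudoconvex {N : ℕ} (Ω : Set (CN N)) : Prop :=
  ∀ K : Set (CN N), K ⊆ Ω → IsCompact K → IsCompact (holHull Ω K)

/-- The hull of a compact set `A ⊆ ℂ` with respect to entire functions. -/
def entireHull (A : Set ℂ) : Set ℂ :=
  {w | ∀ f : ℂ → ℂ, Differentiable ℂ f → ‖f w‖ ≤ ⨆ a ∈ A, ‖f a‖}

/-- `U` is a Runge domain with respect to `Ω`: every function holomorphic on `U` is a
locally uniform limit on `U` of (restrictions of) functions holomorphic on `Ω`. -/
def RungeIn {N : ℕ} (U Ω : Set (CN N)) : Prop :=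
  ∀ f : CN N → ℂ, DifferentiableOn ℂ f U →
    ∀ K : Set (CN N), K ⊆ U → IsCompact K → ∀ ε : ℝ, 0 < ε →
      ∃ g : CN N → ℂ, DifferentiableOn ℂ g Ω ∧ ∀ z ∈ K, ‖g z - f z‖ < ε

/-- `C_φ` is hypercyclic with respect to the sequence `(n l)`. -/
def HypercyclicWrt {N : ℕ} (Ω : Set (CN N)) (φ : CN N → CN N) (n : ℕ → ℕ) : Prop :=
  ∃ f : CN N → ℂ, DifferentiableOn ℂ f Ω ∧
    ∀ g : CN N → ℂ, DifferentiableOn ℂ g Ω →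
      ∀ K : Set (CN N), K ⊆ Ω → IsCompact K → ∀ ε : ℝ, 0 < ε →
        ∃ l : ℕ, ∀ z ∈ K, ‖f (φ^[n l] z) - g z‖ < ε

/-- `C_φ` is hereditarily hypercyclic with respect to `(n l)`:
it is hypercyclic with respect to every subsequence. -/
def HereditarilyHypercyclicWrt {N : ℕ} (Ω : Set (CN N)) (φ : CN N → CN N) (n : ℕ → ℕ) : Prop :=
  ∀ k : ℕ → ℕ, StrictMono k → HypercyclicWrt Ω φ (n ∘ k)

/-- A sequence of self-maps of `Ω` is run-away. -/
def RunAway {N : ℕ} (Ω : Set (CN N)) (f : ℕ → CN N → CN N) : Prop :=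
  ∀ K : Set (CN N), K ⊆ Ω → IsCompact K → ∀ L : Set (CN N), L ⊆ Ω → IsCompact L →
    ∃ l : ℕ, Disjoint (f l '' K) L

/-- A sequence of self-maps of `Ω` is compactly divergent. -/
def CompactlyDivergent {N : ℕ} (Ω : Set (CN N)) (f : ℕ → CN N → CN N) : Prop :=
  ∀ K : Set (CN N), K ⊆ Ω → IsCompact K → ∀ L : Set (CN N), L ⊆ Ω → IsCompact L →
    ∃ l₀ : ℕ, ∀ l ≥ l₀, Disjoint (f l '' K) L

/-- The Möbius pseudodistance `c*_Ω(z, w)`. -/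
def mobiusDist {N : ℕ} (Ω : Set (CN N)) (z w : CN N) : ℝ :=
  sSup {r : ℝ | ∃ F : CN N → ℂ, DifferentiableOn ℂ F Ω ∧ (∀ x ∈ Ω, ‖F x‖ < 1) ∧
    F w = 0 ∧ r = ‖F z‖}

/-- The Carathéodory pseudodistance `c_Ω(z, w)`. -/
def caratDist {N : ℕ} (Ω : Set (CN N)) (z w : CN N) : ℝ :=
  Real.log ((1 + mobiusDist Ω z w) / (1 - mobiusDist Ω z w))

/-- `Ω` is a hypercyclic domain: the necessary conditions (c1), (c2), (c3) are
sufficient for hypercyclicity in `Ω`. -/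
def HypercyclicDomain {N : ℕ} (Ω : Set (CN N)) : Prop :=
  ∀ φ : CN N → CN N, DifferentiableOn ℂ φ Ω → MapsTo φ Ω Ω →
    ∀ n : ℕ → ℕ, StrictMono n →
      InjOn φ Ω → RungeIn (φ '' Ω) Ω → RunAway Ω (fun l => φ^[n l]) →
        HypercyclicWrt Ω φ n

/-- A sequence of maps from a planar set `D` to `Ω ⊆ ℂ^N` is compactly divergent. -/
def CompactlyDivergentFrom {N : ℕ} (D : Set ℂ) (Ω : Set (CN N)) (f : ℕ → ℂ → CN N) : Prop :=
  ∀ K : Set ℂ, K ⊆ D → IsCompact K → ∀ L : Set (CN N), L ⊆ Ω → IsCompact L →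
    ∃ n₀ : ℕ, ∀ n ≥ n₀, Disjoint (f n '' K) L

/-- `Ω` is taut. -/
def Taut {N : ℕ} (Ω : Set (CN N)) : Prop :=
  ∀ f : ℕ → ℂ → CN N,
    (∀ n, DifferentiableOn ℂ (f n) (ball (0 : ℂ) 1)) →
    (∀ n, MapsTo (f n) (ball (0 : ℂ) 1) Ω) →
    CompactlyDivergentFrom (ball (0 : ℂ) 1) Ω f ∨
      ∃ k : ℕ → ℕ, StrictMono k ∧ ∃ g : ℂ → CN N,
        DifferentiableOn ℂ g (ball (0 : ℂ) 1) ∧ MapsTo g (ball (0 : ℂ) 1) Ω ∧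
        TendstoLocallyUniformlyOn (fun m => f (k m)) g atTop (ball (0 : ℂ) 1)

set_option linter.unusedSectionVars false
set_option linter.unusedVariables false
set_option maxHeartbeats 2000000
set_option synthInstance.maxHeartbeats 500000

namespace Stmt18Aux


variable {E : Type*} [AddCommGroup E] [Module ℂ E] [TopologicalSpace E]
  [IsTopologicalAddGroup E] [ContinuousSMul ℂ E] [T2Space E]

lemma continuous_pow_lin (T : E →ₗ[ℂ] E) (hT : Continuous T) : ∀ l : ℕ, Continuous ⇑(T ^ l) := by
  intro l
  induction l with
  | zero => simpa [pow_zero, Module.End.one_eq_id] using continuous_id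
  | succ n ih =>
    have h : (T ^ (n + 1)) = (T ^ n) * T := pow_succ T n
    have h2 : ⇑(T ^ (n + 1)) = ⇑(T ^ n) ∘ ⇑T := by rw [h]; rfl
    rw [h2]; exact ih.comp hT

lemma dense_image_surj {X Y : Type*} [TopologicalSpace X] [TopologicalSpace Y]
    {f : X → Y} (hc : Continuous f) (hs : Function.Surjective f) {s : Set X} (hd : Dense s) :
    Dense (f '' s) := by
  rw [dense_iff_closure_eq]
  apply eq_univ_of_univ_subset
  calc univ = f '' univ := by rw [image_univ, hs.range_eq]
  _ = f '' closure s := by rw [hd.closure_eq]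
  _ ⊆ closure (f '' s) := image_closure_subset_closure_image hc

lemma not_dense_pow (lam : ℂ) : ¬ Dense (Set.range fun l : ℕ => lam ^ l) := by
  intro h
  by_cases hl : ‖lam‖ ≤ 1
  · obtain ⟨b, ⟨l, rfl⟩, hd⟩ := Metric.mem_closure_iff.mp (h (2 : ℂ)) 1 one_pos
    have h1 : ‖(2 : ℂ)‖ - ‖lam ^ l‖ ≤ ‖(2 : ℂ) - lam ^ l‖ := norm_sub_norm_le _ _
    have h2 : ‖lam ^ l‖ ≤ 1 := by
      rw [norm_pow]; exact pow_le_one₀ (norm_nonneg _) hl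
    have h3 : ‖(2 : ℂ)‖ = 2 := by norm_num
    rw [dist_eq_norm] at hd
    linarith
  · push_neg at hl
    obtain ⟨b, ⟨l, rfl⟩, hd⟩ := Metric.mem_closure_iff.mp (h (0 : ℂ)) 1 one_pos
    rw [dist_eq_norm, zero_sub, norm_neg, norm_pow] at hd
    have : (1 : ℝ) ≤ ‖lam‖ ^ l := one_le_pow₀ hl.le
    linarith

/-- Dense range of `T - λ·id` for an operator with a dense orbit. -/
lemma denseRange_sub_smul (T : E →ₗ[ℂ] E) (hT : Continuous T) (x : E)
    (hx : Dense (Set.range fun l : ℕ => (T ^ l) x)) (lam : ℂ) :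
    DenseRange ⇑(T - lam • (LinearMap.id : E →ₗ[ℂ] E)) := by
  set S : E →ₗ[ℂ] E := T - lam • LinearMap.id with hSdef
  set M : Submodule ℂ E := (LinearMap.range S).topologicalClosure with hMdef
  by_contra hne
  have hMne : M ≠ ⊤ := by
    intro htop
    apply hne
    have : Dense ((LinearMap.range S : Submodule ℂ E) : Set E) :=
      Submodule.dense_iff_topologicalClosure_eq_top.mpr htop
    rwa [LinearMap.coe_range] at this
  obtain ⟨y, hy⟩ : ∃ y, y ∉ M := by
    by_contra hcon; push_neg at hcon
    exact hMne (Submodule.eq_top_iff'.mpr hcon)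
  haveI hMcl : IsClosed (M : Set E) := Submodule.isClosed_topologicalClosure _
  set π := M.mkQ with hπdef
  have hπc : Continuous π := (Submodule.isOpenQuotientMap_mkQ M).continuous
  have hπs : Function.Surjective π := Submodule.mkQ_surjective M
  have hkey : ∀ z, π (T z) = lam • π z := by
    intro z
    have hz : T z - lam • z ∈ M := by
      apply Submodule.le_topologicalClosure
      exact ⟨z, by simp [hSdef]⟩
    have h0 : π (T z - lam • z) = 0 := (Submodule.Quotient.mk_eq_zero M).mpr hz
    have h1 : π (T z) - lam • π z = 0 := by rw [← map_smul, ← map_sub]; exact h0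
    have := sub_eq_zero.mp h1
    exact this
  have horb : ∀ l : ℕ, π ((T ^ l) x) = lam ^ l • π x := by
    intro l
    induction l with
    | zero => simp
    | succ n ih =>
      have h : (T ^ (n + 1)) x = T ((T ^ n) x) := by
        rw [pow_succ' T n]; rfl
      rw [h, hkey, ih, smul_smul, ← pow_succ']
  have hdQ : Dense (Set.range fun l : ℕ => lam ^ l • π x) := by
    have h1 : Dense (π '' (Set.range fun l : ℕ => (T ^ l) x)) := dense_image_surj hπc hπs hx
    have h2 : π '' (Set.range fun l : ℕ => (T ^ l) x) = Set.range fun l : ℕ => lam ^ l • π x := by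
      rw [← Set.range_comp]
      exact congrArg _ (funext fun l => horb l)
    rwa [h2] at h1
  have hyne : π y ≠ 0 := fun hcon => hy ((Submodule.Quotient.mk_eq_zero M).mp hcon)
  by_cases hx0 : π x = 0
  · have h0 : (Set.range fun l : ℕ => lam ^ l • π x) = {0} := by
      rw [hx0]; simp
    rw [h0] at hdQ
    have := hdQ.closure_eq
    rw [closure_singleton] at this
    exact hyne (by rw [← Set.mem_singleton_iff, this]; trivial)
  · -- the orbit lies in the line spanned by π x, which is closed
    set w := π x with hwdef
    have hline : (Set.range fun l : ℕ => lam ^ l • w) ⊆ ((ℂ ∙ w : Submodule ℂ (E ⧸ M)) : Set (E ⧸ M)) := by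
      rintro _ ⟨l, rfl⟩
      exact Submodule.smul_mem _ _ (Submodule.mem_span_singleton_self w)
    have hclosed : IsClosed ((ℂ ∙ w : Submodule ℂ (E ⧸ M)) : Set (E ⧸ M)) :=
      Submodule.closed_of_finiteDimensional _
    have htop : ∀ z : E ⧸ M, z ∈ (ℂ ∙ w : Submodule ℂ (E ⧸ M)) := by
      intro z
      have : z ∈ closure (Set.range fun l : ℕ => lam ^ l • w) := hdQ z
      exact (closure_minimal hline hclosed) this
    -- build a continuous linear equivalence with ℂ
    set ψ : ℂ →ₗ[ℂ] (E ⧸ M) := LinearMap.toSpanSingleton ℂ (E ⧸ M) w with hψdef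
    have hinj : Function.Injective ψ := by
      intro a b hab
      have : (a - b) • w = 0 := by
        rw [sub_smul]
        simpa [hψdef, LinearMap.toSpanSingleton_apply, sub_eq_zero] using hab
      rcases smul_eq_zero.mp this with h | h
      · exact sub_eq_zero.mp h
      · exact absurd h hx0
    have hsurj : Function.Surjective ψ := by
      intro z
      have hz := htop z
      rw [LinearMap.span_singleton_eq_range] at hz
      exact hz
    set e : ℂ ≃ₗ[ℂ] (E ⧸ M) := LinearEquiv.ofBijective ψ ⟨hinj, hsurj⟩ with hedef
    haveI : FiniteDimensional ℂ (E ⧸ M) := Module.Finite.equiv e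
    have hsymc : Continuous ⇑(e.symm) := (e.symm : (E ⧸ M) →ₗ[ℂ] ℂ).continuous_of_finiteDimensional
    have hd2 : Dense (⇑(e.symm) '' (Set.range fun l : ℕ => lam ^ l • w)) :=
      dense_image_surj hsymc e.symm.surjective hdQ
    have he1 : e.symm w = 1 := by
      rw [LinearEquiv.symm_apply_eq]
      simp [hedef, hψdef, LinearEquiv.ofBijective_apply, LinearMap.toSpanSingleton_apply]
    have h3 : (⇑(e.symm) '' (Set.range fun l : ℕ => lam ^ l • w)) = Set.range fun l : ℕ => lam ^ l := by
      rw [← Set.range_comp]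
      refine congrArg _ (funext fun l => ?_)
      simp [Function.comp, map_smul, he1, smul_eq_mul]
    rw [h3] at hd2
    exact not_dense_pow lam hd2



variable {E : Type*} [AddCommGroup E] [Module ℂ E] [TopologicalSpace E]
  [IsTopologicalAddGroup E] [ContinuousSMul ℂ E] [T2Space E]

/-- Transfer density of orbit through a commuting dense-range operator. -/
lemma dense_orbit_of_commute (T S : E →ₗ[ℂ] E) (hS : Continuous S)
    (hSd : DenseRange ⇑S) (hcomm : S * T = T * S) (x : E)
    (hx : Dense (Set.range fun l : ℕ => (T ^ l) x)) :
    Dense (Set.range fun l : ℕ => (T ^ l) (S x)) := by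
  have hc : ∀ l : ℕ, S * T ^ l = T ^ l * S := by
    intro l
    induction l with
    | zero => simp
    | succ n ih =>
      rw [pow_succ, ← mul_assoc, ih, mul_assoc, hcomm, ← mul_assoc]
  have h1 : ∀ l : ℕ, (T ^ l) (S x) = S ((T ^ l) x) := by
    intro l
    have := congrArg (fun (A : E →ₗ[ℂ] E) => A x) (hc l)
    simpa [Module.End.mul_apply] using this.symm
  have h2 : (Set.range fun l : ℕ => (T ^ l) (S x)) = ⇑S '' Set.range (fun l : ℕ => (T ^ l) x) := by
    rw [← Set.range_comp]
    exact congrArg _ (funext h1)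
  rw [h2]
  exact hSd.dense_image hS hx

section DSet

variable (T : E →ₗ[ℂ] E) (x : E) (μ : ℕ)

/-- Orbit points whose time lies in a fixed residue class mod `μ`. -/
def pieceSet (j : ZMod μ) : Set E := (fun m : ℕ => (T ^ m) x) '' {m : ℕ | (m : ZMod μ) = j}

/-- Closure of `pieceSet`. -/
def DSet (j : ZMod μ) : Set E := closure (pieceSet T x μ j)

lemma isClosed_DSet (j : ZMod μ) : IsClosed (DSet T x μ j) := isClosed_closure

lemma mem_DSet_self (j : ZMod μ) (m : ℕ) (hm : (m : ZMod μ) = j) : (T ^ m) x ∈ DSet T x μ j :=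
  subset_closure ⟨m, hm, rfl⟩

lemma union_DSet [NeZero μ] (hx : Dense (Set.range fun l : ℕ => (T ^ l) x)) :
    (⋃ j : ZMod μ, DSet T x μ j) = univ := by
  apply eq_univ_of_univ_subset
  have h1 : (Set.range fun l : ℕ => (T ^ l) x) ⊆ ⋃ j : ZMod μ, DSet T x μ j := by
    rintro _ ⟨l, rfl⟩
    exact mem_iUnion.mpr ⟨(l : ZMod μ), mem_DSet_self T x μ _ l rfl⟩
  have h2 : IsClosed (⋃ j : ZMod μ, DSet T x μ j) :=
    isClosed_iUnion_of_finite fun j => isClosed_DSet T x μ j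
  calc univ = closure (Set.range fun l : ℕ => (T ^ l) x) := hx.closure_eq.symm
  _ ⊆ ⋃ j : ZMod μ, DSet T x μ j := closure_minimal h1 h2

lemma image_pow_DSet (hT : Continuous T) (k : ℕ) (j : ZMod μ) :
    ⇑(T ^ k) '' DSet T x μ j ⊆ DSet T x μ (j + k) := by
  refine subset_trans (image_closure_subset_closure_image (continuous_pow_lin T hT k)) (closure_mono ?_)
  rintro _ ⟨_, ⟨m, hm, rfl⟩, rfl⟩
  refine ⟨k + m, ?_, ?_⟩
  · simp only [Set.mem_setOf_eq] at hm ⊢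
    push_cast
    rw [hm, add_comm]
  · rw [← Module.End.mul_apply, ← pow_add]

lemma DSet_mono (hT : Continuous T) (c j : ZMod μ) (hc : x ∈ DSet T x μ c) :
    DSet T x μ j ⊆ DSet T x μ (j + c) := by
  refine closure_minimal ?_ (isClosed_DSet T x μ _)
  rintro _ ⟨m, hm, rfl⟩
  have h1 : (T ^ m) x ∈ ⇑(T ^ m) '' DSet T x μ c := ⟨x, hc, rfl⟩
  have h2 := image_pow_DSet T x μ hT m c h1
  rwa [hm, add_comm] at h2

/-- If the only residue class whose `DSet` contains `x` is `0`, then no point with dense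
orbit can lie in two different `DSet`s. -/
lemma eq_of_mem_two_DSet [NeZero μ] (hT : Continuous T)
    (hJ : ∀ j : ZMod μ, x ∈ DSet T x μ j → j = 0) {y : E}
    (hy : Dense (Set.range fun l : ℕ => (T ^ l) y)) {i j : ZMod μ}
    (hyi : y ∈ DSet T x μ i) (hyj : y ∈ DSet T x μ j) : i = j := by
  have hcov := union_DSet T y μ hy
  obtain ⟨a, ha⟩ : ∃ a : ZMod μ, x ∈ DSet T y μ a := by
    have : x ∈ ⋃ a : ZMod μ, DSet T y μ a := by rw [hcov]; trivial
    exact mem_iUnion.mp this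
  have key : ∀ i' : ZMod μ, y ∈ DSet T x μ i' → x ∈ DSet T x μ (i' + a) := by
    intro i' hyi'
    have h1 : DSet T y μ a ⊆ DSet T x μ (i' + a) := by
      refine closure_minimal ?_ (isClosed_DSet T x μ _)
      rintro _ ⟨m, hm, rfl⟩
      have h2 : (T ^ m) y ∈ ⇑(T ^ m) '' DSet T x μ i' := ⟨y, hyi', rfl⟩
      have h3 := image_pow_DSet T x μ hT m i' h2
      rwa [hm] at h3
    exact h1 ha
  have hi0 := hJ _ (key i hyi)
  have hj0 := hJ _ (key j hyj)
  have : i + a = j + a := by rw [hi0, hj0]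
  exact add_right_cancel this

end DSet

/-- The key prime-order case: Ansari's argument. -/
lemma prime_case (T : E →ₗ[ℂ] E) (hT : Continuous T) (x : E)
    (hx : Dense (Set.range fun l : ℕ => (T ^ l) x)) (q : ℕ) (hq : q.Prime) :
    ∀ ρ : ZMod q, DSet T x q ρ = univ := by
  haveI : Fact q.Prime := ⟨hq⟩
  haveI : NeZero q := ⟨hq.pos.ne'⟩
  have hx0 : x ∈ DSet T x q 0 := by
    have := mem_DSet_self T x q (0 : ZMod q) 0 (by simp)
    simpa using this
  by_cases hJ : ∃ j : ZMod q, j ≠ 0 ∧ x ∈ DSet T x q j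
  · obtain ⟨j, hj0, hjmem⟩ := hJ
    -- x ∈ DSet (n • j) for all n
    have hnsmul : ∀ n : ℕ, x ∈ DSet T x q (n • j) := by
      intro n
      induction n with
      | zero => simpa using hx0
      | succ n ih =>
        have := DSet_mono T x q hT j (n • j) hjmem ih
        rwa [succ_nsmul]
    have hall : ∀ a : ZMod q, x ∈ DSet T x q a := by
      intro a
      have hrepr : ((a * j⁻¹).val : ZMod q) * j = a := by
        rw [ZMod.natCast_val, ZMod.cast_id, mul_assoc, inv_mul_cancel₀ hj0, mul_one]
      have := hnsmul (a * j⁻¹).val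
      rwa [nsmul_eq_mul, hrepr] at this
    intro ρ
    apply eq_univ_of_univ_subset
    rw [← union_DSet T x q hx]
    apply iUnion_subset
    intro a
    have := DSet_mono T x q hT (ρ - a) a (hall _)
    rwa [add_sub_cancel] at this
  · push_neg at hJ
    exfalso
    have hJ' : ∀ j : ZMod q, x ∈ DSet T x q j → j = 0 := by
      intro j hjx
      by_contra hne
      exact hJ j hne hjx
    -- the path s ↦ (1-s)•x + s•(T x) lies in the set of dense-orbit vectors
    set F : ℝ → E := fun s => ((1 : ℂ) - (s : ℝ)) • x + ((s : ℝ) : ℂ) • (T x) with hFdef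
    have hFc : Continuous F := by
      apply Continuous.add
      · exact (continuous_const.sub (Complex.continuous_ofReal.comp continuous_id)).smul continuous_const
      · exact (Complex.continuous_ofReal.comp continuous_id).smul continuous_const
    have hF0 : F 0 = x := by simp [hFdef]
    have hF1 : F 1 = T x := by simp [hFdef]
    have hFhc : ∀ s : ℝ, Dense (Set.range fun l : ℕ => (T ^ l) (F s)) := by
      intro s
      by_cases hs : s = 0
      · rw [hs, hF0]; exact hx
      · have hsC : ((s : ℝ) : ℂ) ≠ 0 := Complex.ofReal_ne_zero.mpr hs
        set lam : ℂ := (((s : ℝ) : ℂ) - 1) / ((s : ℝ) : ℂ) with hlamdef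
        have hslam : ((s : ℝ) : ℂ) * lam = ((s : ℝ) : ℂ) - 1 := by
          rw [hlamdef, mul_div_cancel₀ _ hsC]
        set S0 : E →ₗ[ℂ] E := T - lam • LinearMap.id with hS0def
        set S : E →ₗ[ℂ] E := ((s : ℝ) : ℂ) • S0 with hSdef
        have hS0c : Continuous ⇑S0 := by
          have h1 : ⇑S0 = fun z => T z - lam • z := by
            funext z; simp [hS0def]
          rw [h1]
          exact hT.sub (continuous_const_smul lam)
        have hSc : Continuous ⇑S := by
          have h1 : ⇑S = fun z => ((s : ℝ) : ℂ) • S0 z := by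
            funext z; simp [hSdef]
          rw [h1]
          exact hS0c.const_smul _
        have hS0d : DenseRange ⇑S0 := denseRange_sub_smul T hT x hx lam
        have hSd : DenseRange ⇑S := by
          have h1 : Set.range ⇑S = (fun z => ((s : ℝ) : ℂ) • z) '' Set.range ⇑S0 := by
            rw [← Set.range_comp]
            refine congrArg _ (funext fun z => ?_)
            simp [hSdef]
          have h2 : Function.Surjective (fun z : E => ((s : ℝ) : ℂ) • z) := fun z =>
            ⟨(((s : ℝ) : ℂ))⁻¹ • z, smul_inv_smul₀ hsC z⟩
          unfold DenseRange
          rw [h1]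
          exact dense_image_surj (continuous_const_smul _) h2 hS0d
        have hcomm : S * T = T * S := by
          rw [hSdef, hS0def, ← Module.End.one_eq_id]
          rw [smul_mul_assoc, mul_smul_comm]
          congr 1
          rw [sub_mul, mul_sub, smul_mul_assoc, mul_smul_comm, one_mul, mul_one]
        have hSx : S x = F s := by
          have h1 : S x = ((s : ℝ) : ℂ) • T x - (((s : ℝ) : ℂ) * lam) • x := by
            simp [hSdef, hS0def, smul_sub, smul_smul]
          rw [h1, hslam, hFdef]
          module
        rw [← hSx]
        exact dense_orbit_of_commute T S hSc hSd hcomm x hx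
    -- decompose ℝ into closed preimages
    set A : Set ℝ := F ⁻¹' (DSet T x q 0) with hAdef
    set B : Set ℝ := ⋃ j : {j : ZMod q // j ≠ 0}, F ⁻¹' (DSet T x q j.1) with hBdef
    have hAclosed : IsClosed A := (isClosed_DSet T x q 0).preimage hFc
    have hBclosed : IsClosed B :=
      isClosed_iUnion_of_finite fun j => (isClosed_DSet T x q j.1).preimage hFc
    have hdisj : ∀ s : ℝ, s ∈ A → s ∈ B → False := by
      intro s hsA hsB
      obtain ⟨⟨j, hj⟩, hsj⟩ := mem_iUnion.mp hsB
      exact hj (eq_of_mem_two_DSet T x q hT hJ' (hFhc s) hsj hsA)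
    have hcover : ∀ s : ℝ, s ∈ A ∪ B := by
      intro s
      have h1 : F s ∈ ⋃ j : ZMod q, DSet T x q j := by
        rw [union_DSet T x q hx]; trivial
      obtain ⟨j, hj⟩ := mem_iUnion.mp h1
      by_cases hj0 : j = 0
      · left; rw [hAdef]; rw [hj0] at hj; exact hj
      · right; exact mem_iUnion.mpr ⟨⟨j, hj0⟩, hj⟩
    have hAcompl : A = Bᶜ := by
      ext s
      constructor
      · intro hsA hsB; exact hdisj s hsA hsB
      · intro hsB
        rcases hcover s with h | h
        · exact h
        · exact absurd h hsB
    have hAopen : IsOpen A := by rw [hAcompl]; exact hBclosed.isOpen_compl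
    have hAclopen : IsClopen A := ⟨hAclosed, hAopen⟩
    rcases isClopen_iff.mp hAclopen with h | h
    · have h0A : (0 : ℝ) ∈ A := by
        rw [hAdef, mem_preimage, hF0]; exact hx0
      rw [h] at h0A; exact h0A
    · haveI : Fact (1 < q) := ⟨hq.one_lt⟩
      have h1B : (1 : ℝ) ∈ B := by
        refine mem_iUnion.mpr ⟨⟨1, one_ne_zero⟩, ?_⟩
        rw [mem_preimage, hF1]
        have := mem_DSet_self T x q (1 : ZMod q) 1 (by push_cast; ring)
        simpa [pow_one] using this
      have h1A : (1 : ℝ) ∈ A := by rw [h]; trivial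
      exact hdisj 1 h1A h1B



variable {E : Type*} [AddCommGroup E] [Module ℂ E] [TopologicalSpace E]
  [IsTopologicalAddGroup E] [ContinuousSMul ℂ E] [T2Space E]

/-- The main abstract theorem: a vector with dense `T`-orbit has dense orbit along every
arithmetic progression. -/
theorem abstract_arith (T : E →ₗ[ℂ] E) (hT : Continuous T) (x : E)
    (hx : Dense (Set.range fun l : ℕ => (T ^ l) x)) (μ : ℕ) (hμ : 1 ≤ μ) (ν : ℕ) :
    Dense (Set.range fun l : ℕ => (T ^ (l * μ + ν)) x) := by
  -- Step 1: dense orbit for every power of T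
  have hpow : ∀ μ' : ℕ, 1 ≤ μ' → Dense (Set.range fun l : ℕ => (T ^ (μ' * l)) x) := by
    intro μ'
    induction μ' using Nat.strong_induction_on with
    | _ μ' IH =>
      intro hμ'
      rcases eq_or_lt_of_le hμ' with h1 | h2
      · -- μ' = 1
        have : (Set.range fun l : ℕ => (T ^ (μ' * l)) x) = Set.range fun l : ℕ => (T ^ l) x := by
          refine congrArg _ (funext fun l => ?_)
          rw [← h1, one_mul]
        rw [this]; exact hx
      · -- μ' ≥ 2
        set q := μ'.minFac with hqdef
        have hμ'ne1 : μ' ≠ 1 := by omega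
        have hqp : q.Prime := Nat.minFac_prime hμ'ne1
        set m := μ' / q with hmdef
        have hμeq : m * q = μ' := Nat.div_mul_cancel (Nat.minFac_dvd μ')
        have hm1 : 1 ≤ m := by
          rcases Nat.eq_zero_or_pos m with h | h
          · rw [h, zero_mul] at hμeq; omega
          · exact h
        have hmlt : m < μ' := by
          nlinarith [hqp.one_lt, hm1, hμeq]
        have hx' : Dense (Set.range fun l : ℕ => ((T ^ m) ^ l) x) := by
          have h := IH m hmlt hm1
          have heq : (Set.range fun l : ℕ => ((T ^ m) ^ l) x)
              = Set.range fun l : ℕ => (T ^ (m * l)) x := by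
            refine congrArg _ (funext fun l => ?_)
            rw [← pow_mul]
          rw [heq]; exact h
        have hTm : Continuous ⇑(T ^ m) := continuous_pow_lin T hT m
        haveI : NeZero q := ⟨hqp.pos.ne'⟩
        have hρ := prime_case (T ^ m) hTm x hx' q hqp (0 : ZMod q)
        -- translate
        rw [dense_iff_closure_eq]
        apply eq_univ_of_univ_subset
        rw [← hρ]
        unfold DSet pieceSet
        apply closure_mono
        rintro _ ⟨k, hk, rfl⟩
        simp only [Set.mem_setOf_eq] at hk
        obtain ⟨l, rfl⟩ : ∃ l, k = q * l := by
          have := (ZMod.natCast_eq_zero_iff k q).mp hk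
          exact this
        refine ⟨l, ?_⟩
        show (T ^ (μ' * l)) x = ((T ^ m) ^ (q * l)) x
        rw [← pow_mul]
        congr 2
        calc μ' * l = m * q * l := by rw [hμeq]
        _ = m * (q * l) := by ring
  -- Step 2: T^ν has dense range
  have hTd : DenseRange ⇑T := by
    have h := denseRange_sub_smul T hT x hx 0
    have heq : T - (0 : ℂ) • (LinearMap.id : E →ₗ[ℂ] E) = T := by
      rw [zero_smul, sub_zero]
    rwa [heq] at h
  have hTνd : DenseRange ⇑(T ^ ν) := by
    induction ν with
    | zero =>
      have : ⇑(T ^ 0) = id := by rw [pow_zero]; rfl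
      rw [this]; exact denseRange_id
    | succ n ih =>
      have h2 : ⇑(T ^ (n + 1)) = ⇑(T ^ n) ∘ ⇑T := by rw [pow_succ]; rfl
      rw [h2]
      exact DenseRange.comp ih hTd (continuous_pow_lin T hT n)
  -- Step 3: combine
  have h1 := hpow μ hμ
  have h2 : (Set.range fun l : ℕ => (T ^ (l * μ + ν)) x)
      = ⇑(T ^ ν) '' (Set.range fun l : ℕ => (T ^ (μ * l)) x) := by
    rw [← Set.range_comp]
    refine congrArg _ (funext fun l => ?_)
    show (T ^ (l * μ + ν)) x = (T ^ ν) ((T ^ (μ * l)) x)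
    rw [← Module.End.mul_apply, ← pow_add]
    congr 2
    ring
  rw [h2]
  exact hTνd.dense_image (continuous_pow_lin T hT ν) h1


end Stmt18Aux

theorem stmt_18 {N : ℕ} (Ω : Set (CN N)) (hdom : CNDomain Ω) (hpsc : Pseudoconvex Ω)
    (φ : CN N → CN N) (hφd : DifferentiableOn ℂ φ Ω) (hφm : MapsTo φ Ω Ω)
    (hhyp : HypercyclicWrt Ω φ (fun l => l)) :
    ∀ μ : ℕ, 1 ≤ μ → ∀ ν : ℕ, ν < μ →
      HypercyclicWrt Ω φ (fun l => l * μ + ν) := by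
  intro μ hμ ν hν
  obtain ⟨f, hfd, hfU⟩ := hhyp
  obtain ⟨hΩopen, hΩconn⟩ := hdom
  haveI : LocallyCompactSpace ↥Ω := hΩopen.locallyCompactSpace
  have hφc : ContinuousOn φ Ω := hφd.continuousOn
  let Φ : C(↥Ω, ↥Ω) := ⟨fun z => ⟨φ z.1, hφm z.2⟩, by
    apply Continuous.subtype_mk
    exact hφc.restrict⟩
  have hΦiter : ∀ (l : ℕ) (z : ↥Ω), ((Φ^[l] z : ↥Ω) : CN N) = φ^[l] (z : CN N) := by
    intro l
    induction l with
    | zero => intro z; simp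
    | succ n ih =>
      intro z
      rw [Function.iterate_succ_apply', Function.iterate_succ_apply', ← ih z]
      rfl
  -- the composition operator on continuous functions
  let Tc : C(↥Ω, ℂ) →ₗ[ℂ] C(↥Ω, ℂ) :=
    { toFun := fun g => g.comp Φ
      map_add' := fun g h => by ext z; rfl
      map_smul' := fun c g => by ext z; rfl }
  have hTc : Continuous ⇑Tc := ContinuousMap.continuous_precomp Φ
  have hTcpow : ∀ (l : ℕ) (g : C(↥Ω, ℂ)) (z : ↥Ω), ((Tc ^ l) g) z = g (Φ^[l] z) := by
    intro l
    induction l with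
    | zero => intro g z; rw [pow_zero]; rfl
    | succ n ih =>
      intro g z
      have h : (Tc ^ (n + 1)) g = (Tc ^ n) (Tc g) := by rw [pow_succ]; rfl
      rw [h, ih (Tc g) z]
      show g (Φ (Φ^[n] z)) = g (Φ^[n + 1] z)
      rw [Function.iterate_succ_apply']
  -- restrictions of holomorphic functions
  have hmk : ∀ (G : CN N → ℂ), DifferentiableOn ℂ G Ω → Continuous (fun z : ↥Ω => G z.1) :=
    fun G hG => hG.continuousOn.restrict
  let rest : ∀ (G : CN N → ℂ), DifferentiableOn ℂ G Ω → C(↥Ω, ℂ) := fun G hG => ⟨_, hmk G hG⟩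
  let R : Submodule ℂ C(↥Ω, ℂ) :=
    { carrier := {g | ∃ G : CN N → ℂ, DifferentiableOn ℂ G Ω ∧ ∀ z : ↥Ω, g z = G z.1}
      add_mem' := by
        rintro g h ⟨G, hG, hgG⟩ ⟨H, hH, hhH⟩
        exact ⟨G + H, hG.add hH, fun z => by simp [hgG z, hhH z]⟩
      zero_mem' := ⟨0, differentiableOn_const 0, fun z => rfl⟩
      smul_mem' := by
        rintro c g ⟨G, hG, hgG⟩
        exact ⟨c • G, hG.const_smul c, fun z => by simp [hgG z]⟩ }
  let X : Submodule ℂ C(↥Ω, ℂ) := R.topologicalClosure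
  have hTcR : ∀ g ∈ R, Tc g ∈ R := by
    rintro g ⟨G, hG, hgG⟩
    refine ⟨G ∘ φ, hG.comp hφd hφm, fun z => ?_⟩
    show g (Φ z) = (G ∘ φ) z.1
    rw [hgG (Φ z)]; rfl
  have hTcX : ∀ g ∈ X, Tc g ∈ X := by
    intro g hg
    have h1 : Tc g ∈ Tc '' (closure (R : Set C(↥Ω, ℂ))) := ⟨g, hg, rfl⟩
    have h2 : Tc '' closure (R : Set C(↥Ω, ℂ)) ⊆ closure (Tc '' (R : Set C(↥Ω, ℂ))) :=
      image_closure_subset_closure_image hTc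
    have h3 : Tc '' (R : Set C(↥Ω, ℂ)) ⊆ (R : Set C(↥Ω, ℂ)) := by
      rintro _ ⟨u, hu, rfl⟩; exact hTcR u hu
    exact (closure_mono h3) (h2 h1)
  let TX : ↥X →ₗ[ℂ] ↥X := Tc.restrict hTcX
  have hTXc : Continuous ⇑TX := by
    apply Continuous.subtype_mk
    exact hTc.comp continuous_subtype_val
  have hTXpow : ∀ (l : ℕ) (y : ↥X), (((TX ^ l) y : ↥X) : C(↥Ω, ℂ)) = (Tc ^ l) (y : C(↥Ω, ℂ)) := by
    intro l
    induction l with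
    | zero => intro y; rw [pow_zero, pow_zero]; rfl
    | succ n ih =>
      intro y
      have h1 : (TX ^ (n + 1)) y = (TX ^ n) (TX y) := by rw [pow_succ]; rfl
      have h2 : (Tc ^ (n + 1)) (y : C(↥Ω, ℂ)) = (Tc ^ n) (Tc (y : C(↥Ω, ℂ))) := by
        rw [pow_succ]; rfl
      rw [h1, h2, ih (TX y)]
      rfl
  have hfR : (rest f hfd) ∈ R := ⟨f, hfd, fun z => rfl⟩
  have hfX : (rest f hfd) ∈ X := Submodule.le_topologicalClosure R hfR
  set x : ↥X := ⟨rest f hfd, hfX⟩ with hxdef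
  -- the ε-K characterization of closure in C(↥Ω, ℂ)
  have hbridge : ∀ (g : C(↥Ω, ℂ)) (s : Set C(↥Ω, ℂ)),
      g ∈ closure s ↔ ∀ K : Set ↥Ω, IsCompact K → ∀ ε : ℝ, 0 < ε →
        ∃ u ∈ s, ∀ z ∈ K, dist (g z) (u z) < ε := by
    intro g s
    have hb1 := (Metric.uniformity_basis_dist (α := ℂ)).compactConvergenceUniformity (α := ↥Ω)
    have hb2 := nhds_basis_uniformity' hb1 (x := g)
    rw [mem_closure_iff_nhds_basis hb2]
    constructor
    · intro h K hK ε hε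
      obtain ⟨u, hu, hu2⟩ := h (K, ε) ⟨hK, hε⟩
      exact ⟨u, hu, fun z hz => hu2 z hz⟩
    · rintro h ⟨K, ε⟩ ⟨hK, hε⟩
      obtain ⟨u, hu, hu2⟩ := h K hK ε hε
      exact ⟨u, hu, hu2⟩
  -- density of the orbit in the ambient closure
  have horb : ∀ g ∈ R, (g : C(↥Ω, ℂ)) ∈
      closure (Set.range fun l : ℕ => (Tc ^ l) (rest f hfd)) := by
    rintro g ⟨G, hG, hgG⟩
    rw [hbridge]
    intro K hK ε hε
    have hKim : IsCompact (Subtype.val '' K) := hK.image continuous_subtype_val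
    have hKsub : Subtype.val '' K ⊆ Ω := by rintro _ ⟨z, hz, rfl⟩; exact z.2
    obtain ⟨l, hl⟩ := hfU G hG (Subtype.val '' K) hKsub hKim ε hε
    refine ⟨(Tc ^ l) (rest f hfd), ⟨l, rfl⟩, fun z hz => ?_⟩
    have h1 : ((Tc ^ l) (rest f hfd)) z = f (φ^[l] z.1) := by
      rw [hTcpow l _ z]
      show f ((Φ^[l] z : ↥Ω) : CN N) = f (φ^[l] z.1)
      rw [hΦiter l z]
    rw [h1, hgG z, dist_comm, dist_eq_norm]
    exact hl z.1 ⟨z, hz, rfl⟩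
  have hdense : Dense (Set.range fun l : ℕ => (TX ^ l) x) := by
    intro y
    rw [closure_subtype]
    have himg : (Subtype.val '' (Set.range fun l : ℕ => (TX ^ l) x))
        = Set.range fun l : ℕ => (Tc ^ l) (rest f hfd) := by
      rw [← Set.range_comp]
      refine congrArg _ (funext fun l => ?_)
      show (((TX ^ l) x : ↥X) : C(↥Ω, ℂ)) = (Tc ^ l) (rest f hfd)
      rw [hTXpow l x]
    rw [himg]
    have hy : (y : C(↥Ω, ℂ)) ∈ closure (R : Set C(↥Ω, ℂ)) := y.2
    have hsub : (R : Set C(↥Ω, ℂ)) ⊆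
        closure (Set.range fun l : ℕ => (Tc ^ l) (rest f hfd)) := fun g hg => horb g hg
    have h2 := closure_mono hsub hy
    rwa [closure_closure] at h2
  have hmain := Stmt18Aux.abstract_arith TX hTXc x hdense μ hμ ν
  refine ⟨f, hfd, ?_⟩
  intro g hg K hKΩ hK ε hε
  have hgR : (rest g hg) ∈ R := ⟨g, hg, fun z => rfl⟩
  have hgX : (rest g hg) ∈ X := Submodule.le_topologicalClosure R hgR
  have hy : (⟨rest g hg, hgX⟩ : ↥X) ∈
      closure (Set.range fun l : ℕ => (TX ^ (l * μ + ν)) x) := hmain _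
  rw [closure_subtype] at hy
  have himg : (Subtype.val '' (Set.range fun l : ℕ => (TX ^ (l * μ + ν)) x))
      = Set.range fun l : ℕ => (Tc ^ (l * μ + ν)) (rest f hfd) := by
    rw [← Set.range_comp]
    refine congrArg _ (funext fun l => ?_)
    show (((TX ^ (l * μ + ν)) x : ↥X) : C(↥Ω, ℂ)) = (Tc ^ (l * μ + ν)) (rest f hfd)
    rw [hTXpow _ x]
  rw [himg, hbridge] at hy
  set K' : Set ↥Ω := Subtype.val ⁻¹' K with hK'def
  have hK'c : IsCompact K' := by
    rw [Subtype.isCompact_iff]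
    have himK : Subtype.val '' K' = K := by
      rw [hK'def, Subtype.image_preimage_coe]
      exact inter_eq_self_of_subset_right hKΩ
    rw [himK]; exact hK
  obtain ⟨u, ⟨l, rfl⟩, hu⟩ := hy K' hK'c ε hε
  refine ⟨l, fun z hz => ?_⟩
  have hzΩ : z ∈ Ω := hKΩ hz
  have h1 := hu ⟨z, hzΩ⟩ hz
  have h2 : ((Tc ^ (l * μ + ν)) (rest f hfd)) ⟨z, hzΩ⟩ = f (φ^[l * μ + ν] z) := by
    rw [hTcpow]
    show f ((Φ^[l * μ + ν] (⟨z, hzΩ⟩ : ↥Ω) : ↥Ω) : CN N) = f (φ^[l * μ + ν] z)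
    rw [hΦiter]
  rw [h2] at h1
  have h3 : (rest g hg) ⟨z, hzΩ⟩ = g z := rfl
  rw [h3] at h1
  rw [show ‖f (φ^[l * μ + ν] z) - g z‖ = dist (f (φ^[l * μ + ν] z)) (g z) from (dist_eq_norm _ _).symm,
    dist_comm]
  exact h1
end
end

section
/- Let Ω ⊆ ℂ^N be a pseudoconvex domain and φ : Ω → Ω a holomorphic map. If C_φ is hereditarily hypercyclic with respect to some increasing arithmetic sequence (lμ + ν)_{l ∈ ℕ} of natural numbers (μ ∈ ℕ, μ ≥ 1, ν ∈ {0, …, μ − 1}), then C_φ is hereditarily hypercyclic (with respect to the full sequence n_l = l). -/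
open Set Filter Topology Metric

noncomputable section

theorem stmt_19 {N : ℕ} (Ω : Set (CN N)) (hdom : CNDomain Ω) (hpsc : Pseudoconvex Ω)
    (φ : CN N → CN N) (hφd : DifferentiableOn ℂ φ Ω) (hφm : MapsTo φ Ω Ω)
    (μ ν : ℕ) (hμ : 1 ≤ μ) (hν : ν < μ)
    (hhyp : HereditarilyHypercyclicWrt Ω φ (fun l => l * μ + ν)) :
    HereditarilyHypercyclicWrt Ω φ (fun l => l) := by
  intro k hk
  -- iterates map Ω to Ω and are holomorphic there
  have hiterm : ∀ m : ℕ, MapsTo (φ^[m]) Ω Ω := hφm.iterate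
  have hiterd : ∀ m : ℕ, DifferentiableOn ℂ (φ^[m]) Ω := by
    intro m
    induction m with
    | zero => simpa using differentiableOn_id
    | succ m ih =>
      rw [Function.iterate_succ']
      exact hφd.comp ih (hiterm m)
  -- pigeonhole: some residue r mod μ occurs infinitely often among the k l
  obtain ⟨y, hy⟩ :=
    Finite.exists_infinite_fiber (fun l => (⟨k l % μ, Nat.mod_lt _ hμ⟩ : Fin μ))
  have hrlt : (y : ℕ) < μ := y.isLt
  set S : Set ℕ :=
    ((fun l => (⟨k l % μ, Nat.mod_lt _ hμ⟩ : Fin μ)) ⁻¹' {y}) \ {l | k l < μ + ν} with hSdef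
  have hSinf : S.Infinite :=
    (Set.infinite_coe_iff.mp hy).diff
      ((Set.finite_Iio (μ + ν)).subset (fun l hl => lt_of_le_of_lt hk.le_apply hl))
  have hSmem : ∀ l ∈ S, k l % μ = (y : ℕ) ∧ μ + ν ≤ k l := by
    intro l hl
    obtain ⟨h1, h2⟩ := hl
    refine ⟨congrArg Fin.val h1, ?_⟩
    simpa using not_lt.mp h2
  -- a strictly increasing selection j with values in S
  have hexgt : ∀ a : ℕ, ∃ b ∈ S, a < b := fun a => hSinf.exists_gt a
  choose nx hnxS hnxgt using hexgt
  set j : ℕ → ℕ := fun i => Nat.rec (nx 0) (fun _ p => nx p) i with hjdef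
  have hjS : ∀ i, j i ∈ S := by
    intro i
    cases i <;> exact hnxS _
  have hjmono : StrictMono j := strictMono_nat_of_lt_succ (fun i => hnxgt (j i))
  -- the shift s
  set s : ℕ := (μ + (y : ℕ) - ν) % μ with hsdef
  have hsμ : s < μ := Nat.mod_lt _ hμ
  have hνs : ν + s = (y : ℕ) ∨ ν + s = μ + (y : ℕ) := by
    rcases le_or_gt ν (y : ℕ) with h | h
    · left
      have e : μ + (y : ℕ) - ν = μ + ((y : ℕ) - ν) := by omega
      have e2 : s = (y : ℕ) - ν := by
        rw [hsdef, e, Nat.add_mod_left, Nat.mod_eq_of_lt (by omega)]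
      omega
    · right
      have e2 : s = μ + (y : ℕ) - ν := Nat.mod_eq_of_lt (by omega)
      omega
  -- decompose k (j i) = c i * μ + ν + s
  have exq : ∀ i : ℕ, ∃ q, q * μ + (ν + s) = k (j i) := by
    intro i
    obtain ⟨hmod, hge⟩ := hSmem _ (hjS i)
    obtain ⟨A, hA⟩ : ∃ A, k (j i) = μ * A + (y : ℕ) :=
      ⟨k (j i) / μ, by rw [← hmod]; exact (Nat.div_add_mod _ μ).symm⟩
    rcases hνs with h | h
    · exact ⟨A, by rw [h, hA]; ring⟩
    · have hA1 : 1 ≤ A := by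
        rcases Nat.eq_zero_or_pos A with h0 | h1
        · rw [h0, Nat.mul_zero, Nat.zero_add] at hA
          omega
        · exact h1
      obtain ⟨B, rfl⟩ : ∃ B, A = B + 1 := ⟨A - 1, by omega⟩
      exact ⟨B, by rw [h, hA]; ring⟩
  choose c hc using exq
  have hcmono : StrictMono c := by
    intro i i' hii
    have h2 : k (j i) < k (j i') := hk (hjmono hii)
    rw [← hc i, ← hc i'] at h2
    have h3 : c i * μ < c i' * μ := lt_of_add_lt_add_right h2
    exact lt_of_mul_lt_mul_right h3 (Nat.zero_le μ)
  -- the two universal functions given by the hypothesis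
  obtain ⟨f0, hf0d, hf0⟩ := hhyp (fun l => l + 1) (fun a b hab => Nat.add_lt_add_right hab 1)
  obtain ⟨f, hfd, hf⟩ := hhyp c hcmono
  refine ⟨f, hfd, ?_⟩
  intro g hg K hKΩ hK ε hε
  -- approximate g in the form (f0 ∘ φ^[m]) ∘ φ^[s]
  obtain ⟨l₁, hl₁⟩ := hf0 g hg K hKΩ hK (ε / 2) (by positivity)
  have hl₁' : ∀ z ∈ K, ‖f0 (φ^[(l₁ + 1) * μ + ν] z) - g z‖ < ε / 2 := hl₁
  have hsM : s ≤ (l₁ + 1) * μ + ν :=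
    le_trans hsμ.le (le_trans (Nat.le_mul_of_pos_left μ (Nat.succ_pos l₁)) (Nat.le_add_right _ _))
  set m : ℕ := (l₁ + 1) * μ + ν - s with hmdef
  have hms : m + s = (l₁ + 1) * μ + ν := Nat.sub_add_cancel hsM
  have hFd : DifferentiableOn ℂ (f0 ∘ φ^[m]) Ω := hf0d.comp (hiterd m) (hiterm m)
  -- push the compact set forward by φ^[s]
  have hK'Ω : φ^[s] '' K ⊆ Ω := by
    rintro w ⟨z, hz, rfl⟩
    exact hiterm s (hKΩ hz)
  have hK'c : IsCompact (φ^[s] '' K) :=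
    hK.image_of_continuousOn ((hiterd s).continuousOn.mono hKΩ)
  obtain ⟨i, hi⟩ := hf (f0 ∘ φ^[m]) hFd (φ^[s] '' K) hK'Ω hK'c (ε / 2) (by positivity)
  refine ⟨j i, ?_⟩
  intro z hz
  have e1 : φ^[k (j i)] z = φ^[c i * μ + ν] (φ^[s] z) := by
    rw [← hc i, ← add_assoc]
    exact Function.iterate_add_apply φ (c i * μ + ν) s z
  have hw : φ^[s] z ∈ φ^[s] '' K := ⟨z, hz, rfl⟩
  have h1 : ‖f (φ^[c i * μ + ν] (φ^[s] z)) - (f0 ∘ φ^[m]) (φ^[s] z)‖ < ε / 2 := hi _ hw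
  have e2 : (f0 ∘ φ^[m]) (φ^[s] z) = f0 (φ^[(l₁ + 1) * μ + ν] z) := by
    show f0 (φ^[m] (φ^[s] z)) = _
    rw [← Function.iterate_add_apply, hms]
  rw [e2] at h1
  have h2 := hl₁' z hz
  calc ‖f (φ^[k (j i)] z) - g z‖
      = ‖(f (φ^[c i * μ + ν] (φ^[s] z)) - f0 (φ^[(l₁ + 1) * μ + ν] z))
          + (f0 (φ^[(l₁ + 1) * μ + ν] z) - g z)‖ := by rw [sub_add_sub_cancel, e1]
    _ ≤ ‖f (φ^[c i * μ + ν] (φ^[s] z)) - f0 (φ^[(l₁ + 1) * μ + ν] z)‖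
          + ‖f0 (φ^[(l₁ + 1) * μ + ν] z) - g z‖ := norm_add_le _ _
    _ < ε / 2 + ε / 2 := add_lt_add h1 h2
    _ = ε := add_halves ε
end
end
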